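/- Let q ∈ [0,1] be fixed and let the score distribution S(q) have a density f(·;q) that is single-peaked with peak at q. Let ULG_T round to midpoints of length-1/T intervals. Then, conditioned on ULG_T(s) < ULG_T(q), E[s] ≥ E[ULG_T(s)], and conditioned on ULG_T(s) > ULG_T(q), E[s] ≤ E[ULG_T(s)]. -/

import Mathlib

open MeasureTheory Set

noncomputable def ULG (T : ℕ) (s : ℝ) : ℝ := ((⌊s * T⌋ : ℝ) + 1 / 2) / T

lemma key_pos (a b c K : ℝ) (f : ℝ → ℝ) (hab : a ≤ b) (hc : c = (a+b)/2)
    (hint : IntervalIntegrable (fun x => (x - c) * f x) volume a b)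
    (hmono : ∀ x ∈ Icc a b, (x - c) * K ≤ (x - c) * f x) :
    0 ≤ ∫ x in a..b, (x - c) * f x := by
  have h1 : IntervalIntegrable (fun x => (x - c) * K) volume a b :=
    ((continuous_id.sub continuous_const).mul continuous_const).intervalIntegrable a b
  have h0 : (∫ x in a..b, (x - c) * K) = 0 := by
    rw [intervalIntegral.integral_mul_const]
    have h2 : (∫ x in a..b, (x - c)) = 0 := by
      rw [intervalIntegral.integral_sub intervalIntegral.intervalIntegrable_id
        intervalIntegrable_const, integral_id, intervalIntegral.integral_const,
        smul_eq_mul]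
      subst hc; ring
    rw [h2, zero_mul]
  rw [← h0]
  exact intervalIntegral.integral_mono_on hab h1 hint hmono

lemma key_neg (a b c K : ℝ) (f : ℝ → ℝ) (hab : a ≤ b) (hc : c = (a+b)/2)
    (hint : IntervalIntegrable (fun x => (x - c) * f x) volume a b)
    (hmono : ∀ x ∈ Icc a b, (x - c) * f x ≤ (x - c) * K) :
    (∫ x in a..b, (x - c) * f x) ≤ 0 := by
  have h1 : IntervalIntegrable (fun x => (x - c) * K) volume a b :=
    ((continuous_id.sub continuous_const).mul continuous_const).intervalIntegrable a b
  have h0 : (∫ x in a..b, (x - c) * K) = 0 := by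
    rw [intervalIntegral.integral_mul_const]
    have h2 : (∫ x in a..b, (x - c)) = 0 := by
      rw [intervalIntegral.integral_sub intervalIntegral.intervalIntegrable_id
        intervalIntegrable_const, integral_id, intervalIntegral.integral_const,
        smul_eq_mul]
      subst hc; ring
    rw [h2, zero_mul]
  rw [← h0]
  exact intervalIntegral.integral_mono_on hab hint h1 hmono

lemma interval_eq (T : ℕ) (hT : 1 ≤ T) (f : ℝ → ℝ) (k : ℤ) :
    (∫ x in ((k:ℝ)/T)..(((k:ℝ)+1)/T), (x * f x - ULG T x * f x)) =
    ∫ x in ((k:ℝ)/T)..(((k:ℝ)+1)/T), (x - ((k:ℝ)+1/2)/T) * f x := by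
  have hTpos : (0:ℝ) < T := by exact_mod_cast hT
  have hab : (k:ℝ)/T ≤ ((k:ℝ)+1)/T := by gcongr; linarith
  apply intervalIntegral.integral_congr_ae
  have hb : ∀ᵐ (x:ℝ) ∂volume, x ≠ ((k:ℝ)+1)/T := by
    have h0 : (volume : Measure ℝ) {((k:ℝ)+1)/T} = 0 := measure_singleton _
    filter_upwards [measure_eq_zero_iff_ae_notMem.mp h0] with x hx
    simpa using hx
  filter_upwards [hb] with x hx hxI
  rw [uIoc_of_le hab] at hxI
  have hx1 : (k:ℝ)/T < x := hxI.1
  have hx2 : x < ((k:ℝ)+1)/T := lt_of_le_of_ne hxI.2 hx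
  have hfl : ⌊x * (T:ℝ)⌋ = k := by
    rw [Int.floor_eq_iff]
    constructor
    · exact le_of_lt ((div_lt_iff₀ hTpos).mp hx1)
    · have := (lt_div_iff₀ hTpos).mp hx2
      linarith
  simp only [ULG, hfl]
  ring

lemma interval_low (T : ℕ) (hT : 1 ≤ T) (q : ℝ) (f : ℝ → ℝ)
    (hpeak : ∀ s s' : ℝ, (s ≤ s' ∧ s' ≤ q) ∨ (q ≤ s' ∧ s' ≤ s) → f s ≤ f s')
    (hfi : IntegrableOn f (Icc (0 : ℝ) 1) volume)
    (hsfi : IntegrableOn (fun s => s * f s) (Icc (0 : ℝ) 1) volume)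
    (hq1 : q ≤ 1) (k : ℤ) (hk0 : 0 ≤ k) (hk1 : ((k:ℝ)+1)/T ≤ q) :
    0 ≤ ∫ x in ((k:ℝ)/T)..(((k:ℝ)+1)/T), (x * f x - ULG T x * f x) := by
  have hTpos : (0:ℝ) < T := by exact_mod_cast hT
  have hk0' : (0:ℝ) ≤ (k:ℝ) := by exact_mod_cast hk0
  set a : ℝ := (k:ℝ)/T with ha
  set b : ℝ := ((k:ℝ)+1)/T with hb
  set c : ℝ := ((k:ℝ)+1/2)/T with hc
  have hab : a ≤ b := by rw [ha, hb]; gcongr; linarith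
  have hsub : Icc a b ⊆ Icc (0:ℝ) 1 := by
    apply Icc_subset_Icc
    · rw [ha]; positivity
    · exact hk1.trans hq1
  have hintOn : IntegrableOn (fun x => (x - c) * f x) (Icc a b) volume := by
    have h1 : IntegrableOn (fun x => x * f x - c * f x) (Icc a b) volume :=
      (hsfi.mono_set hsub).sub ((hfi.mono_set hsub).const_mul c)
    exact h1.congr_fun (fun x _ => by ring) measurableSet_Icc
  have hint : IntervalIntegrable (fun x => (x - c) * f x) volume a b := by
    apply IntegrableOn.intervalIntegrable
    rwa [uIcc_of_le hab]
  rw [interval_eq T hT f k, ← hc, ← ha, ← hb]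
  apply key_pos a b c (f c) f hab (by rw [hc, ha, hb]; ring) hint
  intro x hx
  have hcq : c ≤ q := by
    refine le_trans ?_ hk1
    rw [hc, hb]; gcongr; linarith
  have hxq : x ≤ q := le_trans hx.2 hk1
  rcases le_total x c with h | h
  · have hf := hpeak x c (Or.inl ⟨h, hcq⟩)
    nlinarith
  · have hf := hpeak c x (Or.inl ⟨h, hxq⟩)
    nlinarith

lemma interval_high (T : ℕ) (hT : 1 ≤ T) (q : ℝ) (f : ℝ → ℝ)
    (hpeak : ∀ s s' : ℝ, (s ≤ s' ∧ s' ≤ q) ∨ (q ≤ s' ∧ s' ≤ s) → f s ≤ f s')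
    (hfi : IntegrableOn f (Icc (0 : ℝ) 1) volume)
    (hsfi : IntegrableOn (fun s => s * f s) (Icc (0 : ℝ) 1) volume)
    (hq0 : 0 ≤ q) (k : ℤ) (hk0 : q ≤ (k:ℝ)/T) (hk1 : ((k:ℝ)+1)/T ≤ 1) :
    (∫ x in ((k:ℝ)/T)..(((k:ℝ)+1)/T), (x * f x - ULG T x * f x)) ≤ 0 := by
  have hTpos : (0:ℝ) < T := by exact_mod_cast hT
  set a : ℝ := (k:ℝ)/T with ha
  set b : ℝ := ((k:ℝ)+1)/T with hb
  set c : ℝ := ((k:ℝ)+1/2)/T with hc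
  have hab : a ≤ b := by rw [ha, hb]; gcongr; linarith
  have hsub : Icc a b ⊆ Icc (0:ℝ) 1 := by
    apply Icc_subset_Icc
    · exact le_trans hq0 hk0
    · exact hk1
  have hintOn : IntegrableOn (fun x => (x - c) * f x) (Icc a b) volume := by
    have h1 : IntegrableOn (fun x => x * f x - c * f x) (Icc a b) volume :=
      (hsfi.mono_set hsub).sub ((hfi.mono_set hsub).const_mul c)
    exact h1.congr_fun (fun x _ => by ring) measurableSet_Icc
  have hint : IntervalIntegrable (fun x => (x - c) * f x) volume a b := by
    apply IntegrableOn.intervalIntegrable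
    rwa [uIcc_of_le hab]
  rw [interval_eq T hT f k, ← hc, ← ha, ← hb]
  apply key_neg a b c (f c) f hab (by rw [hc, ha, hb]; ring) hint
  intro x hx
  have hqc : q ≤ c := by
    refine le_trans hk0 ?_
    rw [hc, ha]; gcongr; linarith
  have hqx : q ≤ x := le_trans hk0 hx.1
  rcases le_total x c with h | h
  · have hf := hpeak c x (Or.inr ⟨hqx, h⟩)
    nlinarith
  · have hf := hpeak x c (Or.inr ⟨hqc, h⟩)
    nlinarith

theorem conditional_score_vs_midpoint (T : ℕ) (hT : 1 ≤ T) (q : ℝ)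
    (hq : q ∈ Icc (0 : ℝ) 1) (f : ℝ → ℝ)
    (hf0 : ∀ s ∈ Icc (0 : ℝ) 1, 0 ≤ f s)
    (hpeak : ∀ s s' : ℝ, (s ≤ s' ∧ s' ≤ q) ∨ (q ≤ s' ∧ s' ≤ s) → f s ≤ f s')
    (hfi : IntegrableOn f (Icc (0 : ℝ) 1) volume)
    (hsfi : IntegrableOn (fun s => s * f s) (Icc (0 : ℝ) 1) volume)
    (hufi : IntegrableOn (fun s => ULG T s * f s) (Icc (0 : ℝ) 1) volume)
    (hposL : 0 < ∫ s in {x ∈ Icc (0 : ℝ) 1 | ULG T x < ULG T q}, f s)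
    (hposH : 0 < ∫ s in {x ∈ Icc (0 : ℝ) 1 | ULG T q < ULG T x}, f s) :
    ((∫ s in {x ∈ Icc (0 : ℝ) 1 | ULG T x < ULG T q}, s * f s) /
        (∫ s in {x ∈ Icc (0 : ℝ) 1 | ULG T x < ULG T q}, f s) ≥
      (∫ s in {x ∈ Icc (0 : ℝ) 1 | ULG T x < ULG T q}, ULG T s * f s) /
        (∫ s in {x ∈ Icc (0 : ℝ) 1 | ULG T x < ULG T q}, f s)) ∧
    ((∫ s in {x ∈ Icc (0 : ℝ) 1 | ULG T q < ULG T x}, s * f s) /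
        (∫ s in {x ∈ Icc (0 : ℝ) 1 | ULG T q < ULG T x}, f s) ≤
      (∫ s in {x ∈ Icc (0 : ℝ) 1 | ULG T q < ULG T x}, ULG T s * f s) /
        (∫ s in {x ∈ Icc (0 : ℝ) 1 | ULG T q < ULG T x}, f s)) := by
  have hTpos : (0:ℝ) < T := by exact_mod_cast hT
  obtain ⟨hq0, hq1⟩ := hq
  set m : ℤ := ⌊q * (T:ℝ)⌋ with hm
  have hm0 : 0 ≤ m := Int.floor_nonneg.mpr (by positivity)
  have hmle : (m:ℝ) ≤ q * T := Int.floor_le _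
  have hmlt : q * T < (m:ℝ) + 1 := Int.lt_floor_add_one _
  have hmq : (m:ℝ)/T ≤ q := by rw [div_le_iff₀ hTpos]; linarith
  have hqm1 : q < ((m:ℝ)+1)/T := by rw [lt_div_iff₀ hTpos]; linarith
  have hmT : (m:ℝ) ≤ (T:ℝ) := by nlinarith
  have key : ∀ x : ℝ, (ULG T x < ULG T q ↔ ⌊x * (T:ℝ)⌋ < m) := by
    intro x
    rw [hm]
    unfold ULG
    rw [div_lt_div_iff₀ hTpos hTpos, mul_lt_mul_iff_of_pos_right hTpos, add_lt_add_iff_right,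
      Int.cast_lt]
  have key2 : ∀ x : ℝ, (ULG T q < ULG T x ↔ m < ⌊x * (T:ℝ)⌋) := by
    intro x
    rw [hm]
    unfold ULG
    rw [div_lt_div_iff₀ hTpos hTpos, mul_lt_mul_iff_of_pos_right hTpos, add_lt_add_iff_right,
      Int.cast_lt]
  have hLeq : {x ∈ Icc (0:ℝ) 1 | ULG T x < ULG T q} = Ico 0 ((m:ℝ)/T) := by
    ext x
    simp only [mem_setOf_eq, mem_Icc, mem_Ico]
    rw [key x, Int.floor_lt]
    constructor
    · rintro ⟨⟨h0, _⟩, h2⟩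
      exact ⟨h0, (lt_div_iff₀ hTpos).mpr h2⟩
    · rintro ⟨h0, h2⟩
      have h2' := (lt_div_iff₀ hTpos).mp h2
      exact ⟨⟨h0, le_trans (le_of_lt h2) (le_trans hmq hq1)⟩, h2'⟩
  have hHeq : {x ∈ Icc (0:ℝ) 1 | ULG T q < ULG T x} = Icc (((m:ℝ)+1)/T) 1 := by
    ext x
    simp only [mem_setOf_eq, mem_Icc]
    rw [key2 x, Int.lt_iff_add_one_le, Int.le_floor]
    push_cast
    constructor
    · rintro ⟨⟨_, h1⟩, h2⟩
      exact ⟨(div_le_iff₀ hTpos).mpr (by linarith), h1⟩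
    · rintro ⟨h2, h1⟩
      have h2' := (div_le_iff₀ hTpos).mp h2
      have h0 : 0 ≤ x := le_trans (by positivity) h2
      exact ⟨⟨h0, h1⟩, by linarith⟩
  rw [hLeq] at hposL
  rw [hHeq] at hposH
  simp only [hLeq, hHeq]
  have hgi : IntegrableOn (fun x => x * f x - ULG T x * f x) (Icc (0:ℝ) 1) volume :=
    hsfi.sub hufi
  constructor
  · -- low side
    have hLsub : Ico (0:ℝ) ((m:ℝ)/T) ⊆ Icc 0 1 :=
      fun x hx => ⟨hx.1, le_trans (le_of_lt hx.2) (le_trans hmq hq1)⟩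
    have hsplit : (∫ x in Ico (0:ℝ) ((m:ℝ)/T), (x * f x - ULG T x * f x)) =
        (∫ x in Ico (0:ℝ) ((m:ℝ)/T), x * f x) -
          ∫ x in Ico (0:ℝ) ((m:ℝ)/T), ULG T x * f x :=
      integral_sub (hsfi.mono_set hLsub) (hufi.mono_set hLsub)
    have h0m : (0:ℝ) ≤ (m:ℝ)/T := by positivity
    set a : ℕ → ℝ := fun k => (k:ℝ)/T with haa
    have hmtn : ((m.toNat : ℕ):ℝ) = (m:ℝ) := by exact_mod_cast Int.toNat_of_nonneg hm0
    have hint : ∀ k, k < m.toNat → IntervalIntegrable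
        (fun x => x * f x - ULG T x * f x) volume (a k) (a (k+1)) := by
      intro k hk
      have hab : a k ≤ a (k+1) := by
        simp only [haa]; gcongr; push_cast; linarith
      apply IntegrableOn.intervalIntegrable
      rw [uIcc_of_le hab]
      apply hgi.mono_set
      apply Icc_subset_Icc
      · simp only [haa]; positivity
      · simp only [haa]
        have h1 : ((k:ℝ)+1) ≤ (m:ℝ) := by
          have : (k+1 : ℕ) ≤ m.toNat := hk
          calc ((k:ℝ)+1) = ((k+1 : ℕ):ℝ) := by push_cast; ring
            _ ≤ ((m.toNat : ℕ):ℝ) := by exact_mod_cast this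
            _ = (m:ℝ) := hmtn
        push_cast
        calc ((k:ℝ)+1)/T ≤ (m:ℝ)/T := by gcongr
          _ ≤ q := hmq
          _ ≤ 1 := hq1
    have hsum := intervalIntegral.sum_integral_adjacent_intervals (μ := volume)
      (a := a) (n := m.toNat) hint
    have ha0 : a 0 = 0 := by simp [haa]
    have ham : a m.toNat = (m:ℝ)/T := by simp only [haa]; rw [hmtn]
    have hg0 : 0 ≤ ∫ x in Ico (0:ℝ) ((m:ℝ)/T), (x * f x - ULG T x * f x) := by
      rw [ha0, ham] at hsum
      rw [MeasureTheory.integral_Ico_eq_integral_Ioo,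
        ← MeasureTheory.integral_Ioc_eq_integral_Ioo,
        ← intervalIntegral.integral_of_le h0m, ← hsum]
      apply Finset.sum_nonneg
      intro k hk
      rw [Finset.mem_range] at hk
      have h1 : ((k:ℝ)+1) ≤ (m:ℝ) := by
        have : (k+1 : ℕ) ≤ m.toNat := hk
        calc ((k:ℝ)+1) = ((k+1 : ℕ):ℝ) := by push_cast; ring
          _ ≤ ((m.toNat : ℕ):ℝ) := by exact_mod_cast this
          _ = (m:ℝ) := hmtn
      have hk1 : (((k:ℤ):ℝ)+1)/T ≤ q := by
        push_cast
        calc ((k:ℝ)+1)/T ≤ (m:ℝ)/T := by gcongr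
          _ ≤ q := hmq
      have hres := interval_low T hT q f hpeak hfi hsfi hq1 (k:ℤ) (by positivity) hk1
      simp only [haa]
      push_cast at hres ⊢
      exact hres
    rw [hsplit] at hg0
    rw [ge_iff_le, div_le_div_iff₀ hposL hposL]
    nlinarith [hposL]
  · -- high side
    by_cases hTm : (m:ℝ) + 1 ≤ (T:ℝ)
    · have hm1T : ((m:ℝ)+1)/T ≤ 1 := by rw [div_le_one hTpos]; linarith
      have hHsub : Icc (((m:ℝ)+1)/T) 1 ⊆ Icc 0 1 :=
        fun x hx => ⟨le_trans (by positivity) hx.1, hx.2⟩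
      have hsplit : (∫ x in Icc (((m:ℝ)+1)/T) 1, (x * f x - ULG T x * f x)) =
          (∫ x in Icc (((m:ℝ)+1)/T) 1, x * f x) -
            ∫ x in Icc (((m:ℝ)+1)/T) 1, ULG T x * f x :=
        integral_sub (hsfi.mono_set hHsub) (hufi.mono_set hHsub)
      set p : ℕ := m.toNat with hp
      have hptn : ((p : ℕ):ℝ) = (m:ℝ) := by
        rw [hp]; exact_mod_cast Int.toNat_of_nonneg hm0
      have hpT : p + 1 ≤ T := by
        have : ((p:ℝ)) + 1 ≤ (T:ℝ) := by rw [hptn]; exact hTm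
        exact_mod_cast this
      set n2 : ℕ := T - (p+1) with hn2
      have hpn2 : p + 1 + n2 = T := by omega
      set b : ℕ → ℝ := fun k => ((p + 1 + k : ℕ):ℝ)/T with hbb
      have hb0 : b 0 = ((m:ℝ)+1)/T := by
        simp only [hbb]; push_cast [hptn]; ring_nf
      have hbn : b n2 = 1 := by
        simp only [hbb, hpn2]
        exact div_self (ne_of_gt hTpos)
      have hint : ∀ k, k < n2 → IntervalIntegrable
          (fun x => x * f x - ULG T x * f x) volume (b k) (b (k+1)) := by
        intro k hk
        have hab : b k ≤ b (k+1) := by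
          simp only [hbb]
          have h : ((p+1+k:ℕ):ℝ) ≤ ((p+1+(k+1):ℕ):ℝ) := by
            exact_mod_cast (show p+1+k ≤ p+1+(k+1) by omega)
          gcongr
        apply IntegrableOn.intervalIntegrable
        rw [uIcc_of_le hab]
        apply hgi.mono_set
        apply Icc_subset_Icc
        · simp only [hbb]; positivity
        · simp only [hbb]
          rw [div_le_one hTpos]
          have : p + 1 + (k+1) ≤ T := by omega
          exact_mod_cast this
      have hsum := intervalIntegral.sum_integral_adjacent_intervals (μ := volume)
        (a := b) (n := n2) hint
      have hg0 : (∫ x in Icc (((m:ℝ)+1)/T) 1, (x * f x - ULG T x * f x)) ≤ 0 := by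
        rw [hb0, hbn] at hsum
        rw [MeasureTheory.integral_Icc_eq_integral_Ioc,
          ← intervalIntegral.integral_of_le hm1T, ← hsum]
        apply Finset.sum_nonpos
        intro k hk
        rw [Finset.mem_range] at hk
        have hk0' : q ≤ (((p+1+k : ℕ):ℤ):ℝ)/T := by
          push_cast [hptn]
          rw [le_div_iff₀ hTpos]
          have hk0'' : (0:ℝ) ≤ (k:ℝ) := by positivity
          linarith
        have hk1' : ((((p+1+k : ℕ):ℤ):ℝ)+1)/T ≤ 1 := by
          rw [div_le_one hTpos]
          have : p + 1 + k + 1 ≤ T := by omega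
          push_cast
          exact_mod_cast this
        have hres := interval_high T hT q f hpeak hfi hsfi hq0
          ((p+1+k : ℕ):ℤ) hk0' hk1'
        simp only [hbb]
        push_cast at hres ⊢
        have heq : ((p:ℝ) + 1 + ((k:ℝ) + 1)) = (p:ℝ) + 1 + (k:ℝ) + 1 := by ring
        rw [heq]
        exact hres
      rw [hsplit] at hg0
      rw [div_le_div_iff₀ hposH hposH]
      nlinarith [hposH]
    · exfalso
      have hemp : Icc (((m:ℝ)+1)/T) 1 = ∅ := by
        apply Icc_eq_empty
        rw [not_le, lt_div_iff₀ hTpos]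
        push_neg at hTm
        linarith
      rw [hemp] at hposH
      simp at hposH
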